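/- Let G be a group, A a left G-module (an abelian group with G-action by additive automorphisms), and g ∈ G. Let O(g) ⊆ G be the conjugacy class of g, and equip the abelian group O(g) →₀ A with the diagonal G-action (σ · f)(τ) = σ · f(σ⁻¹τσ). Then the coinvariants of this G-action on O(g) →₀ A are isomorphic, as an abelian group, to the coinvariants A_{C(g)} of the restricted action of the centralizer C(g) = {σ ∈ G : σg = gσ} on A, i.e., to A modulo the subgroup generated by all σ·a − a with σ ∈ C(g), a ∈ A; the isomorphism is induced by evaluating at g (sending the class of a·δ_g to the class of a). -/

import Mathlib

/-- The conjugacy class `O(g) = {τ g τ⁻¹ : τ ∈ G}` of `g`, as a subtype of `G`. -/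
def ConjOrbit (G : Type*) [Group G] (g : G) := {τ : G // IsConj g τ}

/-- Conjugation by `σ` permutes the conjugacy class `O(g)`. -/
def conjMapO (G : Type*) [Group G] (g σ : G) : ConjOrbit G g → ConjOrbit G g :=
  fun τ => ⟨σ * τ.1 * σ⁻¹, τ.2.trans (isConj_iff.mpr ⟨σ, rfl⟩)⟩

/-- The diagonal action of `σ : G` on `O(g) →₀ A`, sending `f` to
`τ ↦ σ • f (σ⁻¹ τ σ)`. -/
noncomputable def diagO (G : Type*) [Group G] (A : Type*) [AddCommGroup A]
    [DistribMulAction G A] (g σ : G) : (ConjOrbit G g →₀ A) →+ (ConjOrbit G g →₀ A) :=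
  (Finsupp.mapDomain.addMonoidHom (conjMapO G g σ)).comp
    (Finsupp.mapRange.addMonoidHom (DistribMulAction.toAddMonoidHom A σ))

/-- The subgroup of `O(g) →₀ A` generated by the elements `σ · f − f`; the quotient by it
is the group of coinvariants of the diagonal `G`-action on `O(g) →₀ A`. -/
noncomputable def orbitRel (G : Type*) [Group G] (A : Type*) [AddCommGroup A]
    [DistribMulAction G A] (g : G) : AddSubgroup (ConjOrbit G g →₀ A) :=
  AddSubgroup.closure
    {x | ∃ (σ : G) (f : ConjOrbit G g →₀ A), x = diagO G A g σ f - f}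

/-- The subgroup of `A` generated by the elements `σ • a − a` with `σ` in the centralizer
`C(g)`; the quotient by it is the group of coinvariants `A_{C(g)}`. -/
noncomputable def centRel (G : Type*) [Group G] (A : Type*) [AddCommGroup A]
    [DistribMulAction G A] (g : G) : AddSubgroup A :=
  AddSubgroup.closure
    {x | ∃ σ ∈ Subgroup.centralizer ({g} : Set G), ∃ a : A, x = σ • a - a}

section Aux

variable {G : Type*} [Group G] {A : Type*} [AddCommGroup A] [DistribMulAction G A] (g : G)

/-- A choice of conjugator: `co g τ * g * (co g τ)⁻¹ = τ`. -/
noncomputable def co (τ : ConjOrbit G g) : G := (isConj_iff.mp τ.2).choose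

lemma co_spec (τ : ConjOrbit G g) : co g τ * g * (co g τ)⁻¹ = τ.1 :=
  (isConj_iff.mp τ.2).choose_spec

lemma diagO_single (σ : G) (τ : ConjOrbit G g) (a : A) :
    diagO G A g σ (Finsupp.single τ a) = Finsupp.single (conjMapO G g σ τ) (σ • a) := by
  simp [diagO, Finsupp.mapRange_single, Finsupp.mapDomain_single]

lemma cent_smul_eq (h : G) (hh : h ∈ Subgroup.centralizer ({g} : Set G)) (b : A) :
    (QuotientAddGroup.mk' (centRel G A g)) (h • b) = QuotientAddGroup.mk' (centRel G A g) b := by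
  have hm : h • b - b ∈ centRel G A g := AddSubgroup.subset_closure ⟨h, hh, b, rfl⟩
  exact (QuotientAddGroup.mk'_eq_mk' (centRel G A g)).mpr
    ⟨-(h • b - b), neg_mem hm, by abel⟩

/-- Evaluation-type map `O(g) →₀ A →+ A_{C(g)}`, sending `single τ a` to
`[(co g τ)⁻¹ • a]`. -/
noncomputable def phi : (ConjOrbit G g →₀ A) →+ A ⧸ centRel G A g :=
  Finsupp.liftAddHom fun τ =>
    (QuotientAddGroup.mk' (centRel G A g)).comp (DistribMulAction.toAddMonoidHom A (co g τ)⁻¹)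

lemma phi_single (τ : ConjOrbit G g) (a : A) :
    phi g (Finsupp.single τ a) = QuotientAddGroup.mk' (centRel G A g) ((co g τ)⁻¹ • a) :=
  Finsupp.liftAddHom_apply_single _ _ _

lemma phi_diagO (σ : G) (f : ConjOrbit G g →₀ A) : phi g (diagO G A g σ f) = phi g f := by
  suffices h : (phi g).comp (diagO G A g σ) = phi g from DFunLike.congr_fun h f
  apply Finsupp.addHom_ext
  intro τ a
  simp only [AddMonoidHom.comp_apply, diagO_single, phi_single]
  set c1 := co g τ with hc1
  set c2 := co g (conjMapO G g σ τ) with hc2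
  have h1 : c1 * g * c1⁻¹ = τ.1 := co_spec g τ
  have h2 : c2 * g * c2⁻¹ = σ * τ.1 * σ⁻¹ := co_spec g (conjMapO G g σ τ)
  have key : (c2⁻¹ * σ * c1) * g * (c2⁻¹ * σ * c1)⁻¹ = g := by
    calc (c2⁻¹ * σ * c1) * g * (c2⁻¹ * σ * c1)⁻¹
        = c2⁻¹ * (σ * (c1 * g * c1⁻¹) * σ⁻¹) * c2 := by group
      _ = c2⁻¹ * (σ * τ.1 * σ⁻¹) * c2 := by rw [h1]
      _ = c2⁻¹ * (c2 * g * c2⁻¹) * c2 := by rw [h2]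
      _ = g := by group
  have hcent : c2⁻¹ * σ * c1 ∈ Subgroup.centralizer ({g} : Set G) := by
    rw [Subgroup.mem_centralizer_iff]
    intro x hx
    rw [Set.mem_singleton_iff] at hx
    subst hx
    calc x * (c2⁻¹ * σ * c1)
        = ((c2⁻¹ * σ * c1) * x * (c2⁻¹ * σ * c1)⁻¹) * (c2⁻¹ * σ * c1) := by rw [key]
      _ = (c2⁻¹ * σ * c1) * x := by group
  have hsmul : c2⁻¹ • σ • a = (c2⁻¹ * σ * c1) • (c1⁻¹ • a) := by
    rw [smul_smul, smul_smul]
    congr 1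
    group
  rw [hsmul, cent_smul_eq g _ hcent]

lemma phi_orbitRel : ∀ x ∈ orbitRel G A g, phi g x = 0 := by
  intro x hx
  induction hx using AddSubgroup.closure_induction with
  | mem x hx =>
    obtain ⟨σ, f, rfl⟩ := hx
    rw [map_sub, phi_diagO, sub_self]
  | zero => exact map_zero _
  | add x y _ _ ihx ihy => rw [map_add, ihx, ihy, add_zero]
  | neg x _ ihx => rw [map_neg, ihx, neg_zero]

/-- The map `a ↦ [single ⟨g⟩ a]`. -/
noncomputable def theta : A →+ (ConjOrbit G g →₀ A) ⧸ orbitRel G A g :=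
  (QuotientAddGroup.mk' (orbitRel G A g)).comp
    (Finsupp.singleAddHom (⟨g, IsConj.refl g⟩ : ConjOrbit G g))

lemma theta_centRel : ∀ x ∈ centRel G A g, theta g x = 0 := by
  intro x hx
  induction hx using AddSubgroup.closure_induction with
  | mem x hx =>
    obtain ⟨σ, hσ, a, rfl⟩ := hx
    have hgσ : σ * g * σ⁻¹ = g := by
      have := (Subgroup.mem_centralizer_iff.mp hσ) g (Set.mem_singleton g)
      group
      rw [← this]
      group
    have hfix : conjMapO G g σ (⟨g, IsConj.refl g⟩ : ConjOrbit G g)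
        = ⟨g, IsConj.refl g⟩ := Subtype.ext hgσ
    have hmem : Finsupp.single (⟨g, IsConj.refl g⟩ : ConjOrbit G g) (σ • a)
        - Finsupp.single (⟨g, IsConj.refl g⟩ : ConjOrbit G g) a ∈ orbitRel G A g := by
      refine AddSubgroup.subset_closure
        ⟨σ, Finsupp.single (⟨g, IsConj.refl g⟩ : ConjOrbit G g) a, ?_⟩
      erw [diagO_single, hfix]
      rfl
    show QuotientAddGroup.mk' (orbitRel G A g)
      (Finsupp.single (⟨g, IsConj.refl g⟩ : ConjOrbit G g) (σ • a - a)) = 0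
    erw [Finsupp.single_sub, QuotientAddGroup.mk'_apply, QuotientAddGroup.eq_zero_iff]
    exact hmem
  | zero => exact map_zero _
  | add x y _ _ ihx ihy => rw [map_add, ihx, ihy, add_zero]
  | neg x _ ihx => rw [map_neg, ihx, neg_zero]

lemma single_eq_quot (τ : ConjOrbit G g) (a : A) :
    QuotientAddGroup.mk' (orbitRel G A g) (Finsupp.single τ a) =
      QuotientAddGroup.mk' (orbitRel G A g)
        (Finsupp.single (⟨g, IsConj.refl g⟩ : ConjOrbit G g) ((co g τ)⁻¹ • a)) := by
  set u : ConjOrbit G g →₀ A :=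
    Finsupp.single (⟨g, IsConj.refl g⟩ : ConjOrbit G g) ((co g τ)⁻¹ • a) with hu
  have hconj : conjMapO G g (co g τ) (⟨g, IsConj.refl g⟩ : ConjOrbit G g) = τ :=
    Subtype.ext (co_spec g τ)
  have hdiag : diagO G A g (co g τ) u = Finsupp.single τ a := by
    erw [hu, diagO_single, hconj, smul_inv_smul]
  have hmem : Finsupp.single τ a - u ∈ orbitRel G A g := by
    refine AddSubgroup.subset_closure ⟨co g τ, u, ?_⟩
    rw [hdiag]
  exact (QuotientAddGroup.mk'_eq_mk' _).mpr
    ⟨-(Finsupp.single τ a - u), neg_mem hmem, by abel⟩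

end Aux

/-- The coinvariants of the diagonal `G`-action on `O(g) →₀ A` are isomorphic to the
coinvariants `A_{C(g)}` of the centralizer action on `A`, via the map induced by
evaluation at `g` (sending the class of `a·δ_g` to the class of `a`). -/
theorem stmt4 {G : Type*} [Group G] {A : Type*} [AddCommGroup A] [DistribMulAction G A]
    (g : G) :
    ∃ e : ((ConjOrbit G g →₀ A) ⧸ orbitRel G A g) ≃+ (A ⧸ centRel G A g),
      ∀ a : A,
        e (QuotientAddGroup.mk' (orbitRel G A g)
            (Finsupp.single ⟨g, IsConj.refl g⟩ a)) =
          QuotientAddGroup.mk' (centRel G A g) a := by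
  set F := QuotientAddGroup.lift (orbitRel G A g) (phi g) (fun x hx => AddMonoidHom.mem_ker.mpr (phi_orbitRel g x hx)) with hF
  set Gi := QuotientAddGroup.lift (centRel G A g) (theta g) (fun x hx => AddMonoidHom.mem_ker.mpr (theta_centRel g x hx)) with hGi
  have hco_mem : (co g (⟨g, IsConj.refl g⟩ : ConjOrbit G g))⁻¹
      ∈ Subgroup.centralizer ({g} : Set G) := by
    refine inv_mem ?_
    rw [Subgroup.mem_centralizer_iff]
    intro x hx
    rw [Set.mem_singleton_iff] at hx
    rw [hx]
    have h := co_spec g (⟨g, IsConj.refl g⟩ : ConjOrbit G g)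
    set c := co g (⟨g, IsConj.refl g⟩ : ConjOrbit G g)
    calc g * c = (c * g * c⁻¹) * c := by rw [h]
      _ = c * g := by group
  have hFsingle : ∀ a : A,
      F (QuotientAddGroup.mk' (orbitRel G A g)
        (Finsupp.single (⟨g, IsConj.refl g⟩ : ConjOrbit G g) a)) =
      QuotientAddGroup.mk' (centRel G A g) a := by
    intro a
    rw [hF]
    erw [QuotientAddGroup.mk'_apply, QuotientAddGroup.lift_mk, phi_single]
    exact cent_smul_eq g _ hco_mem a
  have hleft : ∀ x, Gi (F x) = x := by
    have : (Gi.comp F).comp (QuotientAddGroup.mk' (orbitRel G A g)) =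
        QuotientAddGroup.mk' (orbitRel G A g) := by
      apply Finsupp.addHom_ext
      intro τ a
      simp only [AddMonoidHom.comp_apply]
      rw [hF, QuotientAddGroup.mk'_apply, QuotientAddGroup.lift_mk, phi_single, hGi,
        QuotientAddGroup.mk'_apply, QuotientAddGroup.lift_mk]
      show QuotientAddGroup.mk' (orbitRel G A g)
        (Finsupp.single (⟨g, IsConj.refl g⟩ : ConjOrbit G g) ((co g τ)⁻¹ • a)) = _
      rw [← single_eq_quot, QuotientAddGroup.mk'_apply]
    have h2 : Gi.comp F = AddMonoidHom.id _ :=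
      QuotientAddGroup.addMonoidHom_ext _ (by rw [AddMonoidHom.id_comp]; exact this)
    intro x
    exact DFunLike.congr_fun h2 x
  have hright : ∀ y, F (Gi y) = y := by
    have : (F.comp Gi).comp (QuotientAddGroup.mk' (centRel G A g)) =
        QuotientAddGroup.mk' (centRel G A g) := by
      ext a
      simp only [AddMonoidHom.comp_apply]
      rw [hGi, QuotientAddGroup.mk'_apply, QuotientAddGroup.lift_mk]
      show F (QuotientAddGroup.mk' (orbitRel G A g)
        (Finsupp.single (⟨g, IsConj.refl g⟩ : ConjOrbit G g) a)) = _
      rw [hFsingle, QuotientAddGroup.mk'_apply]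
    have h2 : F.comp Gi = AddMonoidHom.id _ :=
      QuotientAddGroup.addMonoidHom_ext _ (by rw [AddMonoidHom.id_comp]; exact this)
    intro y
    exact DFunLike.congr_fun h2 y
  let e : ((ConjOrbit G g →₀ A) ⧸ orbitRel G A g) ≃+ (A ⧸ centRel G A g) :=
    { toFun := F
      invFun := Gi
      left_inv := hleft
      right_inv := hright
      map_add' := F.map_add }
  exact ⟨e, hFsingle⟩
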